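/- arXiv:1808.04701 — 9 statements merged into one kernel-verified Lean document; each statement's English description precedes it below -/
import Mathlib

section
/- Let μ be a probability measure on ℝ with μ((-∞,0)) = 0 and finite first moment ∫ a dμ(a) < ∞, whose cumulative distribution function F is continuous, and let F̄(r) = μ((r,∞)). Define the supplier's expected payoff g(r) = r·∫ (a − r)⁺ dμ(a) for r ≥ 0. If r* ≥ 0 maximizes g over [0,∞) and g(r*) > 0, then r* satisfies the fixed point equation r* = m(r*), where m(r) = (∫_r^∞ F̄(u) du)/F̄(r) is the mean residual life function of μ at r. -/
open MeasureTheory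

/-- If the demand `α ∼ μ` is a nonnegative random variable with continuous CDF and
finite mean, and `r* ≥ 0` maximizes the supplier's expected payoff
`g(r) = r * E[(α - r)⁺]` over `[0, ∞)` with `g(r*) > 0`, then `r*` satisfies the
fixed point equation `r* = m(r*)`, where `m` is the mean residual life function. -/
theorem optimal_price_is_mrl_fixed_point
    (μ : Measure ℝ) [IsProbabilityMeasure μ]
    (hnonneg : μ (Set.Iio 0) = 0)
    (hmean : Integrable (fun a : ℝ => a) μ)
    (hcdf_cont : Continuous (fun x : ℝ => (μ (Set.Iic x)).toReal))
    (Fbar : ℝ → ℝ) (hFbar : ∀ r, Fbar r = (μ (Set.Ioi r)).toReal)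
    (m : ℝ → ℝ) (hm : ∀ r, m r = (∫ u in Set.Ioi r, Fbar u) / Fbar r)
    (g : ℝ → ℝ) (hg : ∀ r, g r = r * ∫ a, max (a - r) 0 ∂μ)
    (rstar : ℝ) (hrstar : 0 ≤ rstar)
    (hmax : ∀ r : ℝ, 0 ≤ r → g r ≤ g rstar)
    (hpos : 0 < g rstar) :
    rstar = m rstar := by
  classical
  set H : ℝ → ℝ := fun r => ∫ a, max (a - r) 0 ∂μ with hHdef
  have hInt : ∀ r : ℝ, Integrable (fun a => max (a - r) 0) μ := fun r =>
    (hmean.sub (integrable_const r)).pos_part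
  have hHnn : ∀ r : ℝ, 0 ≤ H r := fun r =>
    integral_nonneg (fun a => le_max_right _ _)
  -- positivity of rstar and H rstar
  have hgr : g rstar = rstar * H rstar := hg rstar
  have hr0 : 0 < rstar := by
    rcases lt_or_eq_of_le hrstar with h | h
    · exact h
    · exfalso; rw [hgr, ← h] at hpos; simp at hpos
  have hH0 : 0 < H rstar := by
    by_contra h
    push_neg at h
    nlinarith [hgr, hpos]
  -- Fbar rstar > 0
  have hFpos : 0 < Fbar rstar := by
    rw [hFbar]
    refine ENNReal.toReal_pos ?_ (measure_ne_top μ _)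
    intro h0
    have : H rstar = 0 := by
      refine integral_eq_zero_of_ae ?_
      have : μ {a : ℝ | ¬ (max (a - rstar) 0 = 0)} = 0 := by
        refine measure_mono_null ?_ h0
        intro a ha
        simp only [Set.mem_setOf_eq] at ha
        have : 0 < max (a - rstar) 0 :=
          lt_of_le_of_ne (le_max_right _ _) (Ne.symm ha)
        have : 0 < a - rstar := by
          by_contra hle
          push_neg at hle
          simp [max_eq_right hle] at this
        simpa [Set.mem_Ioi] using by linarith
      exact (ae_iff).mpr this
    linarith
  -- the sandwich estimate
  have key : ∀ r s : ℝ, r ≤ s →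
      (s - r) * Fbar s ≤ H r - H s ∧ H r - H s ≤ (s - r) * Fbar r := by
    intro r s hrs
    have hdiff : H r - H s = ∫ a, (max (a - r) 0 - max (a - s) 0) ∂μ :=
      (integral_sub (hInt r) (hInt s)).symm
    have hindint : ∀ t : ℝ, Integrable ((Set.Ioi t).indicator fun _ : ℝ => s - r) μ :=
      fun t => (integrable_const (s - r)).indicator measurableSet_Ioi
    have hindval : ∀ t : ℝ,
        ∫ a, (Set.Ioi t).indicator (fun _ : ℝ => s - r) a ∂μ = (s - r) * Fbar t := by
      intro t
      rw [integral_indicator_const (s - r) measurableSet_Ioi, hFbar, smul_eq_mul, mul_comm, measureReal_def]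
    constructor
    · rw [hdiff, ← hindval s]
      refine integral_mono (hindint s) ((hInt r).sub (hInt s)) ?_
      intro a
      by_cases ha : a ∈ Set.Ioi s
      · have has : s < a := ha
        simp only [Set.indicator_of_mem ha]
        rw [max_eq_left (by linarith), max_eq_left (by linarith)]
        ring_nf
        exact le_refl _
      · simp only [Set.indicator_of_notMem ha]
        have : max (a - s) 0 ≤ max (a - r) 0 := max_le_max (by linarith) le_rfl
        linarith
    · rw [hdiff, ← hindval r]
      refine integral_mono ((hInt r).sub (hInt s)) (hindint r) ?_
      intro a
      by_cases ha : a ∈ Set.Ioi r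
      · simp only [Set.indicator_of_mem ha]
        have h1 : a - s ≤ max (a - s) 0 := le_max_left _ _
        have h2 : (0:ℝ) ≤ max (a - s) 0 := le_max_right _ _
        have h3 : max (a - r) 0 = a - r := max_eq_left (by have := ha; simp only [Set.mem_Ioi] at this; linarith)
        by_cases hs : a ≤ s
        · rw [h3]; linarith
        · rw [h3]; push_neg at hs; rw [max_eq_left (by linarith)]; linarith
      · simp only [Set.indicator_of_notMem ha]
        have hale : a ≤ r := by simpa using ha
        rw [max_eq_right (by linarith)]
        have : (0:ℝ) ≤ max (a - s) 0 := le_max_right _ _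
        linarith
  -- upper bound: H rstar ≤ rstar * Fbar rstar
  have hub : ∀ s : ℝ, rstar < s → H rstar ≤ s * Fbar rstar := by
    intro s hs
    have h1 := (key rstar s hs.le).2
    have h2 : s * H s ≤ rstar * H rstar := by
      have := hmax s (by linarith)
      rwa [hg s, hg rstar] at this
    nlinarith [hHnn s]
  have hle : H rstar ≤ rstar * Fbar rstar := by
    by_contra h
    push_neg at h
    set c := H rstar / Fbar rstar with hc
    have hrc : rstar < c := (lt_div_iff₀ hFpos).mpr (by linarith)
    have hcF : c * Fbar rstar = H rstar := div_mul_cancel₀ _ (ne_of_gt hFpos)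
    have hs : rstar < (rstar + c) / 2 := by linarith
    have := hub ((rstar + c) / 2) hs
    nlinarith
  -- lower bound: rstar * Fbar rstar ≤ H rstar
  have hlb : ∀ r : ℝ, 0 ≤ r → r < rstar → r * Fbar rstar ≤ H rstar := by
    intro r hr hrs
    have h1 := (key r rstar hrs.le).1
    have h2 : r * H r ≤ rstar * H rstar := by
      have := hmax r hr
      rwa [hg r, hg rstar] at this
    nlinarith
  have hge : rstar * Fbar rstar ≤ H rstar := by
    by_contra h
    push_neg at h
    set c := H rstar / Fbar rstar with hc
    have hrc : c < rstar := (div_lt_iff₀ hFpos).mpr (by linarith)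
    have hcF : c * Fbar rstar = H rstar := div_mul_cancel₀ _ (ne_of_gt hFpos)
    have hc0 : 0 ≤ c := div_nonneg (hHnn rstar) hFpos.le
    have hr1 : 0 ≤ (c + rstar) / 2 := by linarith
    have hr2 : (c + rstar) / 2 < rstar := by linarith
    have := hlb ((c + rstar) / 2) hr1 hr2
    nlinarith
  have hHeq : H rstar = rstar * Fbar rstar := le_antisymm hle hge
  -- layer cake: H rstar = ∫ u in Ioi rstar, Fbar u
  have hlayer : H rstar = ∫ u in Set.Ioi rstar, Fbar u := by
    have hnn : 0 ≤ᵐ[μ] fun a => max (a - rstar) 0 :=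
      Filter.Eventually.of_forall fun a => le_max_right _ _
    have h1 : H rstar = ∫ t in Set.Ioi (0:ℝ),
        ENNReal.toReal (μ {a : ℝ | t < max (a - rstar) 0}) :=
      (hInt rstar).integral_eq_integral_meas_lt hnn
    have h2 : ∀ t ∈ Set.Ioi (0:ℝ),
        ENNReal.toReal (μ {a : ℝ | t < max (a - rstar) 0}) = Fbar (rstar + t) := by
      intro t ht
      simp only [Set.mem_Ioi] at ht
      have : {a : ℝ | t < max (a - rstar) 0} = Set.Ioi (rstar + t) := by
        ext a
        simp only [Set.mem_setOf_eq, Set.mem_Ioi, lt_max_iff]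
        constructor
        · rintro (h | h)
          · linarith
          · linarith
        · intro h; left; linarith
      rw [this, hFbar]
    have h3 : (∫ t in Set.Ioi (0:ℝ),
        ENNReal.toReal (μ {a : ℝ | t < max (a - rstar) 0})) =
        ∫ t in Set.Ioi (0:ℝ), Fbar (rstar + t) := by
      refine setIntegral_congr_fun measurableSet_Ioi ?_
      intro t ht
      exact h2 t ht
    have h4 : (∫ t in Set.Ioi (0:ℝ), Fbar (rstar + t)) =
        ∫ u in Set.Ioi rstar, Fbar u := by
      rw [← integral_indicator measurableSet_Ioi, ← integral_indicator measurableSet_Ioi]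
      have : (Set.Ioi (0:ℝ)).indicator (fun t => Fbar (rstar + t)) =
          fun t => (Set.Ioi rstar).indicator Fbar (rstar + t) := by
        funext t
        by_cases ht : (0:ℝ) < t
        · rw [Set.indicator_of_mem (Set.mem_Ioi.mpr ht),
            Set.indicator_of_mem (Set.mem_Ioi.mpr (by linarith))]
        · push_neg at ht
          rw [Set.indicator_of_notMem (by simpa using ht),
            Set.indicator_of_notMem (by simp; linarith)]
      rw [this]
      exact integral_add_left_eq_self (μ := volume) (fun u => (Set.Ioi rstar).indicator Fbar u) rstar
    rw [h1, h3, h4]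
  -- conclude
  rw [hm, ← hlayer, hHeq, mul_div_assoc, div_self (ne_of_gt hFpos), mul_one]
end

section
/- Let μ be a probability measure on ℝ with μ((-∞,0)) = 0, continuous cumulative distribution function F, finite second moment ∫ a² dμ(a) < ∞, survival function F̄(r) = μ((r,∞)), and mean residual life function m(r) = (∫_r^∞ F̄(u) du)/F̄(r) defined for r with F̄(r) > 0. Assume μ is strictly DGMRL, i.e. the generalized mean residual life function e(r) = m(r)/r is strictly decreasing on {r > 0 : F̄(r) > 0}. Then there exists a unique r* > 0 with F̄(r*) > 0 satisfying r* = m(r*), and this r* is the unique maximizer over [0,∞) of the supplier's expected payoff g(r) = r·∫ (a − r)⁺ dμ(a). -/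
open MeasureTheory


section Aux
variable (μ : Measure ℝ) [IsProbabilityMeasure μ]
  (Fbar : ℝ → ℝ) (hFbar : ∀ r, Fbar r = (μ (Set.Ioi r)).toReal)

include hFbar in
lemma Fbar_eq_one_sub : ∀ r, Fbar r = 1 - (μ (Set.Iic r)).toReal := by
  intro r
  rw [hFbar]
  have h1 : μ (Set.Ioi r) = μ Set.univ - μ (Set.Iic r) := by
    rw [← Set.compl_Iic, measure_compl measurableSet_Iic (measure_ne_top μ _)]
  rw [h1, measure_univ, ENNReal.toReal_sub_of_le (prob_le_one) (by simp)]
  simp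

include hFbar in
lemma Fbar_anti : Antitone Fbar := by
  intro a b hab
  rw [hFbar, hFbar]
  exact ENNReal.toReal_mono (measure_ne_top μ _) (measure_mono (Set.Ioi_subset_Ioi hab))

include hFbar in
lemma Fbar_nonneg : ∀ r, 0 ≤ Fbar r := fun r => by rw [hFbar]; positivity

include hFbar in
lemma Fbar_le_one : ∀ r, Fbar r ≤ 1 := by
  intro r; rw [hFbar]
  exact ENNReal.toReal_le_of_le_ofReal one_pos.le (by simpa using prob_le_one)

end Aux
set_option linter.unusedSectionVars false

section Aux2
variable (μ : Measure ℝ) [IsProbabilityMeasure μ]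
  (Fbar : ℝ → ℝ) (hFbar : ∀ r, Fbar r = (μ (Set.Ioi r)).toReal)
  (hcdf_cont : Continuous (fun x : ℝ => (μ (Set.Iic x)).toReal))
  (hnonneg : μ (Set.Iio 0) = 0)

include hFbar hcdf_cont in
lemma Fbar_cont : Continuous Fbar := by
  have : Fbar = fun r => 1 - (μ (Set.Iic r)).toReal := funext (Fbar_eq_one_sub μ Fbar hFbar)
  rw [this]
  exact continuous_const.sub hcdf_cont

include hcdf_cont hnonneg in
lemma cdf_zero_eq : (μ (Set.Iic (0:ℝ))).toReal = 0 := by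
  have hseq : Filter.Tendsto (fun n : ℕ => -(1:ℝ)/(n+1)) Filter.atTop (nhds 0) := by
    have := tendsto_one_div_add_atTop_nhds_zero_nat (𝕜 := ℝ)
    have h2 : Filter.Tendsto (fun n : ℕ => -(1 / ((n:ℝ) + 1))) Filter.atTop (nhds (-0)) :=
      this.neg
    simpa [neg_div] using h2
  have h3 : Filter.Tendsto (fun n : ℕ => (μ (Set.Iic (-(1:ℝ)/(n+1)))).toReal)
      Filter.atTop (nhds ((μ (Set.Iic (0:ℝ))).toReal)) :=
    (hcdf_cont.continuousAt.tendsto).comp hseq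
  have h4 : ∀ n : ℕ, (μ (Set.Iic (-(1:ℝ)/(n+1)))).toReal = 0 := by
    intro n
    have : μ (Set.Iic (-(1:ℝ)/(n+1))) = 0 := by
      apply measure_mono_null _ hnonneg
      intro x hx
      simp only [Set.mem_Iic] at hx
      have : -(1:ℝ)/(n+1) < 0 :=
        div_neg_of_neg_of_pos (by norm_num) (by positivity)
      exact Set.mem_Iio.mpr (lt_of_le_of_lt hx this)
    simp [this]
  have h5 : Filter.Tendsto (fun _ : ℕ => (0:ℝ)) Filter.atTop (nhds ((μ (Set.Iic (0:ℝ))).toReal)) := by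
    simpa [h4] using h3
  exact (tendsto_const_nhds_iff.mp h5).symm

include hFbar hcdf_cont hnonneg in
lemma Fbar_zero : Fbar 0 = 1 := by
  rw [Fbar_eq_one_sub μ Fbar hFbar, cdf_zero_eq μ hcdf_cont hnonneg]; ring
end Aux2

section Aux3
variable (μ : Measure ℝ) [IsProbabilityMeasure μ]
  (Fbar : ℝ → ℝ) (hFbar : ∀ r, Fbar r = (μ (Set.Ioi r)).toReal)
  (hsecond : Integrable (fun a : ℝ => a ^ 2) μ)
  (hcdf_cont : Continuous (fun x : ℝ => (μ (Set.Iic x)).toReal))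

include hsecond in
lemma int_max (r : ℝ) (hr : 0 ≤ r) : Integrable (fun a => max (a - r) 0) μ := by
  apply (hsecond.add (integrable_const 1)).mono
  · exact (continuous_id.sub continuous_const).max continuous_const |>.aestronglyMeasurable
  · refine Filter.Eventually.of_forall (fun a => ?_)
    have h1 : max (a - r) 0 ≤ |a| := by
      rcases le_or_gt a 0 with h | h
      · have : a - r ≤ 0 := by linarith
        simp [max_eq_right this, abs_nonneg]
      · have : a - r ≤ a := by linarith
        calc max (a - r) 0 ≤ max a 0 := max_le_max this le_rfl
          _ = a := max_eq_left h.le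
          _ ≤ |a| := le_abs_self a
    have h2 : |a| ≤ a ^ 2 + 1 := by nlinarith [abs_nonneg a, sq_abs a, sq_nonneg (|a| - 1)]
    have h3 : ‖max (a - r) 0‖ = max (a - r) 0 := Real.norm_of_nonneg (le_max_right _ _)
    rw [h3]
    calc max (a - r) 0 ≤ |a| := h1
      _ ≤ a ^ 2 + 1 := h2
      _ ≤ ‖a ^ 2 + 1‖ := le_abs_self _

include hFbar hsecond hcdf_cont in
lemma FbarIntOn (r : ℝ) : IntegrableOn Fbar (Set.Ioi r) := by
  have hcont := Fbar_cont μ Fbar hFbar hcdf_cont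
  have base : IntegrableOn Fbar (Set.Ioi 0) := by
    constructor
    · exact hcont.aestronglyMeasurable.restrict
    · rw [hasFiniteIntegral_iff_ofReal (Filter.Eventually.of_forall
        (fun t => Fbar_nonneg μ Fbar hFbar t))]
    -- ∫⁻ t in Ioi 0, ofReal (Fbar t) < ∞
      have key : ∫⁻ t in Set.Ioi (0:ℝ), ENNReal.ofReal (Fbar t)
          = ∫⁻ t in Set.Ioi (0:ℝ), μ {a : ℝ | t < max a 0} := by
        apply setLIntegral_congr_fun measurableSet_Ioi
        intro t (ht : 0 < t)
        show ENNReal.ofReal (Fbar t) = μ {a : ℝ | t < max a 0}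
        have hset : {a : ℝ | t < max a 0} = Set.Ioi t := by
          ext a
          simp only [Set.mem_setOf_eq, Set.mem_Ioi, lt_max_iff]
          constructor
          · rintro (h | h); exact h; exact absurd h (not_lt.mpr ht.le)
          · exact fun h => Or.inl h
        rw [hFbar, hset, ENNReal.ofReal_toReal (measure_ne_top μ _)]
      rw [key, ← lintegral_eq_lintegral_meas_lt μ
        (Filter.Eventually.of_forall (fun a => le_max_right a 0))
        ((continuous_id.max continuous_const).aemeasurable)]
      exact (by simpa using int_max μ hsecond 0 le_rfl : Integrable (fun a => max a 0) μ).lintegral_lt_top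
  rcases le_or_gt 0 r with h | h
  · exact base.mono_set (Set.Ioi_subset_Ioi h)
  · have h1 : IntegrableOn Fbar (Set.Ioc r 0) := hcont.integrableOn_Ioc
    have h2 : Set.Ioi r ⊆ Set.Ioc r 0 ∪ Set.Ioi 0 := by
      intro x hx
      rcases le_or_gt x 0 with hx0 | hx0
      · exact Or.inl ⟨hx, hx0⟩
      · exact Or.inr hx0
    exact (h1.union base).mono_set h2

end Aux3

section Aux4
variable (μ : Measure ℝ) [IsProbabilityMeasure μ]
  (Fbar : ℝ → ℝ) (hFbar : ∀ r, Fbar r = (μ (Set.Ioi r)).toReal)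
  (hsecond : Integrable (fun a : ℝ => a ^ 2) μ)
  (hcdf_cont : Continuous (fun x : ℝ => (μ (Set.Iic x)).toReal))

include hFbar hsecond in
lemma layer_cake (r : ℝ) (hr : 0 ≤ r) :
    ∫ a, max (a - r) 0 ∂μ = ∫ u in Set.Ioi r, Fbar u := by
  have h1 : ∫ a, max (a - r) 0 ∂μ
      = ∫ t in Set.Ioi (0:ℝ), (μ {a : ℝ | t < max (a - r) 0}).toReal :=
    (int_max μ hsecond r hr).integral_eq_integral_meas_lt
      (Filter.Eventually.of_forall (fun a => le_max_right _ _))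
  have h2 : ∫ t in Set.Ioi (0:ℝ), (μ {a : ℝ | t < max (a - r) 0}).toReal
      = ∫ t in Set.Ioi (0:ℝ), Fbar (r + t) := by
    apply setIntegral_congr_fun measurableSet_Ioi
    intro t (ht : 0 < t)
    have hset : {a : ℝ | t < max (a - r) 0} = Set.Ioi (r + t) := by
      ext a
      simp only [Set.mem_setOf_eq, Set.mem_Ioi, lt_max_iff]
      constructor
      · rintro (h | h)
        · linarith
        · exact absurd h (not_lt.mpr ht.le)
      · intro h; exact Or.inl (by linarith)
    simp only []
    rw [hset, hFbar]
  have h3 : ∫ t in Set.Ioi (0:ℝ), Fbar (r + t) = ∫ u in Set.Ioi r, Fbar u := by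
    have hpre : (fun t => r + t) ⁻¹' (Set.Ioi r) = Set.Ioi (0:ℝ) := by
      ext t; simp
    rw [← (measurePreserving_add_left volume r).setIntegral_preimage_emb
      (measurableEmbedding_addLeft r) Fbar (Set.Ioi r), hpre]
  rw [h1, h2, h3]

end Aux4

section Aux5
variable (μ : Measure ℝ) [IsProbabilityMeasure μ]
  (Fbar : ℝ → ℝ) (hFbar : ∀ r, Fbar r = (μ (Set.Ioi r)).toReal)
  (hsecond : Integrable (fun a : ℝ => a ^ 2) μ)
  (hcdf_cont : Continuous (fun x : ℝ => (μ (Set.Iic x)).toReal))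

include hFbar hsecond hcdf_cont in
lemma H_split (s : ℝ) : (∫ u in Set.Ioi s, Fbar u)
    = (∫ u in Set.Ioi (0:ℝ), Fbar u) - ∫ u in (0:ℝ)..s, Fbar u := by
  have hint := FbarIntOn μ Fbar hFbar hsecond hcdf_cont
  rcases le_or_gt 0 s with h | h
  · rw [intervalIntegral.integral_of_le h]
    have hsplit : ∫ u in Set.Ioi (0:ℝ), Fbar u
        = (∫ u in Set.Ioc 0 s, Fbar u) + ∫ u in Set.Ioi s, Fbar u := by
      rw [← setIntegral_union (Set.Ioc_disjoint_Ioi le_rfl) measurableSet_Ioi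
        ((hint 0).mono_set Set.Ioc_subset_Ioi_self) (hint s),
        Set.Ioc_union_Ioi_eq_Ioi h]
    linarith
  · rw [intervalIntegral.integral_symm, intervalIntegral.integral_of_le h.le]
    have hsplit : ∫ u in Set.Ioi s, Fbar u
        = (∫ u in Set.Ioc s 0, Fbar u) + ∫ u in Set.Ioi (0:ℝ), Fbar u := by
      rw [← setIntegral_union (Set.Ioc_disjoint_Ioi le_rfl) measurableSet_Ioi
        ((hint s).mono_set Set.Ioc_subset_Ioi_self) (hint 0),
        Set.Ioc_union_Ioi_eq_Ioi h.le]
    linarith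

include hFbar hsecond hcdf_cont in
lemma H_hasDeriv (r : ℝ) :
    HasDerivAt (fun s => ∫ u in Set.Ioi s, Fbar u) (-Fbar r) r := by
  have hcont := Fbar_cont μ Fbar hFbar hcdf_cont
  have hftc : HasDerivAt (fun s => ∫ u in (0:ℝ)..s, Fbar u) (Fbar r) r :=
    intervalIntegral.integral_hasDerivAt_right (hcont.intervalIntegrable 0 r)
      (hcont.stronglyMeasurable.stronglyMeasurableAtFilter) hcont.continuousAt
  have hkey : (fun s => ∫ u in Set.Ioi s, Fbar u)
      = fun s => (∫ u in Set.Ioi (0:ℝ), Fbar u) - ∫ u in (0:ℝ)..s, Fbar u :=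
    funext (H_split μ Fbar hFbar hsecond hcdf_cont)
  rw [hkey]
  simpa using (hftc.const_sub (∫ u in Set.Ioi (0:ℝ), Fbar u))

include hFbar hsecond hcdf_cont in
lemma phi_hasDeriv (r : ℝ) :
    HasDerivAt (fun s => s * ∫ u in Set.Ioi s, Fbar u)
      ((∫ u in Set.Ioi r, Fbar u) - r * Fbar r) r := by
  have := (hasDerivAt_id r).mul (H_hasDeriv μ Fbar hFbar hsecond hcdf_cont r)
  refine this.congr_deriv ?_
  simp only [id, one_mul]
  ring

end Aux5

section Aux6
variable (μ : Measure ℝ) [IsProbabilityMeasure μ]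
  (Fbar : ℝ → ℝ) (hFbar : ∀ r, Fbar r = (μ (Set.Ioi r)).toReal)
  (hsecond : Integrable (fun a : ℝ => a ^ 2) μ)
  (hcdf_cont : Continuous (fun x : ℝ => (μ (Set.Iic x)).toReal))

include hsecond in
lemma g_le_tail (r : ℝ) (hr : 0 ≤ r) :
    r * ∫ a, max (a - r) 0 ∂μ ≤ ∫ a in Set.Ioi r, a ^ 2 ∂μ := by
  rw [← integral_const_mul, ← integral_indicator measurableSet_Ioi]
  apply integral_mono ((int_max μ hsecond r hr).const_mul r)
    (hsecond.indicator measurableSet_Ioi)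
  intro a
  show r * max (a - r) 0 ≤ Set.indicator (Set.Ioi r) (fun a => a ^ 2) a
  rcases le_or_gt a r with h | h
  · have : max (a - r) 0 = 0 := max_eq_right (by linarith)
    rw [this, mul_zero]
    exact Set.indicator_nonneg (fun x _ => sq_nonneg x) a
  · rw [Set.indicator_of_mem (Set.mem_Ioi.mpr h) (fun a => a ^ 2), max_eq_left (by linarith : (0:ℝ) ≤ a - r)]
    nlinarith

include hsecond in
lemma tail_tendsto :
    Filter.Tendsto (fun n : ℕ => ∫ a in Set.Ioi (n:ℝ), a ^ 2 ∂μ)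
      Filter.atTop (nhds 0) := by
  have hbound : ∀ (n : ℕ), ∀ᵐ a ∂μ,
      ‖Set.indicator (Set.Iic ((n:ℕ):ℝ)) (fun a : ℝ => a ^ 2) a‖ ≤ a ^ 2 := by
    intro n
    refine Filter.Eventually.of_forall (fun a => ?_)
    rw [Real.norm_eq_abs]
    rcases le_or_gt a (n:ℝ) with h | h
    · rw [Set.indicator_of_mem (Set.mem_Iic.mpr h), abs_of_nonneg (sq_nonneg a)]
    · rw [Set.indicator_of_notMem (by simpa using h.not_ge)]
      simp [sq_nonneg]
  have hptw : ∀ᵐ a ∂μ, Filter.Tendsto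
      (fun n : ℕ => Set.indicator (Set.Iic ((n:ℕ):ℝ)) (fun a : ℝ => a ^ 2) a)
      Filter.atTop (nhds (a ^ 2)) := by
    refine Filter.Eventually.of_forall (fun a => ?_)
    apply Filter.Tendsto.congr' _ tendsto_const_nhds
    filter_upwards [Filter.eventually_ge_atTop (Nat.ceil |a|)] with n hn
    have ha : a ≤ (n:ℝ) :=
      le_trans (le_abs_self a) (le_trans (Nat.le_ceil _) (by exact_mod_cast hn))
    rw [Set.indicator_of_mem (Set.mem_Iic.mpr ha)]
  have hIic : Filter.Tendsto (fun n : ℕ => ∫ a in Set.Iic (n:ℝ), a ^ 2 ∂μ)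
      Filter.atTop (nhds (∫ a, a ^ 2 ∂μ)) := by
    have := tendsto_integral_of_dominated_convergence (μ := μ)
      (F := fun (n : ℕ) (a : ℝ) => Set.indicator (Set.Iic ((n:ℕ):ℝ)) (fun a : ℝ => a ^ 2) a)
      (f := fun a : ℝ => a ^ 2) (bound := fun a : ℝ => a ^ 2)
      (fun n => (hsecond.aestronglyMeasurable.indicator measurableSet_Iic))
      hsecond hbound hptw
    simpa [integral_indicator measurableSet_Iic] using this
  have hsplit : ∀ n : ℕ, ∫ a in Set.Ioi (n:ℝ), a ^ 2 ∂μ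
      = (∫ a, a ^ 2 ∂μ) - ∫ a in Set.Iic (n:ℝ), a ^ 2 ∂μ := by
    intro n
    have := integral_add_compl (measurableSet_Iic (a := (n:ℝ))) hsecond
    rw [Set.compl_Iic] at this
    linarith
  simp only [hsplit]
  have := (tendsto_const_nhds (x := ∫ a, a ^ 2 ∂μ) (f := Filter.atTop (α := ℕ))).sub hIic
  rw [sub_self] at this
  exact this

include hFbar hsecond hcdf_cont in
lemma H_pos (r0 r1 : ℝ) (h01 : r0 < r1) (hF1 : 0 < Fbar r1) :
    0 < ∫ u in Set.Ioi r0, Fbar u := by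
  have hanti := Fbar_anti μ Fbar hFbar
  have hnn := Fbar_nonneg μ Fbar hFbar
  have hint := FbarIntOn μ Fbar hFbar hsecond hcdf_cont
  have h1 : (r1 - r0) * Fbar r1 ≤ ∫ u in Set.Ioc r0 r1, Fbar u := by
    have := setIntegral_mono_on (integrableOn_const measure_Ioc_lt_top.ne)
      ((hint r0).mono_set Set.Ioc_subset_Ioi_self) measurableSet_Ioc
      (fun x hx => hanti hx.2 : ∀ x ∈ Set.Ioc r0 r1, Fbar r1 ≤ Fbar x)
    rw [setIntegral_const, Real.volume_real_Ioc_of_le h01.le] at this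
    simpa [smul_eq_mul] using this
  have h2 : ∫ u in Set.Ioc r0 r1, Fbar u ≤ ∫ u in Set.Ioi r0, Fbar u :=
    setIntegral_mono_set (hint r0)
      (Filter.Eventually.of_forall (fun x => hnn x))
      (HasSubset.Subset.eventuallyLE Set.Ioc_subset_Ioi_self)
  nlinarith [mul_pos (by linarith : (0:ℝ) < r1 - r0) hF1]

end Aux6

/-- If the demand `α ∼ μ` is nonnegative with continuous CDF, finite second moment,
and strictly decreasing generalized mean residual life `e(r) = m(r)/r` on
`{r > 0 : F̄(r) > 0}`, then there is a unique `r* > 0` with `F̄(r*) > 0` solving the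
fixed point equation `r* = m(r*)`, and this `r*` is the unique maximizer over
`[0, ∞)` of the supplier's expected payoff `g(r) = r * E[(α - r)⁺]`. -/
theorem dgmrl_unique_optimal_price
    (μ : Measure ℝ) [IsProbabilityMeasure μ]
    (hnonneg : μ (Set.Iio 0) = 0)
    (hsecond : Integrable (fun a : ℝ => a ^ 2) μ)
    (hcdf_cont : Continuous (fun x : ℝ => (μ (Set.Iic x)).toReal))
    (Fbar : ℝ → ℝ) (hFbar : ∀ r, Fbar r = (μ (Set.Ioi r)).toReal)
    (m : ℝ → ℝ) (hm : ∀ r, m r = (∫ u in Set.Ioi r, Fbar u) / Fbar r)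
    (hdgmrl : StrictAntiOn (fun r : ℝ => m r / r) {r : ℝ | 0 < r ∧ 0 < Fbar r})
    (g : ℝ → ℝ) (hg : ∀ r, g r = r * ∫ a, max (a - r) 0 ∂μ) :
    ∃ rstar : ℝ,
      (0 < rstar ∧ 0 < Fbar rstar ∧ rstar = m rstar) ∧
      (∀ r : ℝ, (0 < r ∧ 0 < Fbar r ∧ r = m r) → r = rstar) ∧
      (∀ r : ℝ, 0 ≤ r → g r ≤ g rstar) ∧
      (∀ r : ℝ, 0 ≤ r → g r = g rstar → r = rstar) := by
  have hanti := Fbar_anti μ Fbar hFbar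
  have hnn := Fbar_nonneg μ Fbar hFbar
  have hcont := Fbar_cont μ Fbar hFbar hcdf_cont
  have hF0 : Fbar 0 = 1 := Fbar_zero μ Fbar hFbar hcdf_cont hnonneg
  set H : ℝ → ℝ := fun r => ∫ u in Set.Ioi r, Fbar u with hHdef
  set φ : ℝ → ℝ := fun r => r * H r with hφdef
  have hgφ : ∀ r : ℝ, 0 ≤ r → g r = φ r := by
    intro r hr
    rw [hg, layer_cake μ Fbar hFbar hsecond r hr]
  have hφderiv : ∀ r : ℝ, HasDerivAt φ (H r - r * Fbar r) r :=
    fun r => phi_hasDeriv μ Fbar hFbar hsecond hcdf_cont r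
  have φcont : Continuous φ :=
    continuous_iff_continuousAt.mpr (fun r => (hφderiv r).continuousAt)
  have hH0 : ∀ r : ℝ, Fbar r = 0 → H r = 0 := by
    intro r hr
    have : ∀ u ∈ Set.Ioi r, Fbar u = (0 : ℝ) := fun u hu =>
      le_antisymm (hr ▸ hanti (le_of_lt hu)) (hnn u)
    rw [hHdef]
    simp only []
    rw [setIntegral_congr_fun measurableSet_Ioi this, integral_zero]
  -- find small positive points where Fbar > 1/2
  have hev : ∀ᶠ x in nhds (0:ℝ), (1:ℝ)/2 < Fbar x := by
    have := (hcont.tendsto 0).eventually (eventually_gt_nhds (by rw [hF0]; norm_num : (1:ℝ)/2 < Fbar 0))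
    simpa using this
  obtain ⟨ε, hε, hball⟩ := Metric.eventually_nhds_iff.mp hev
  set r0 : ℝ := ε/2 with hr0def
  set r1 : ℝ := 3*ε/4 with hr1def
  have hr0pos : 0 < r0 := by positivity
  have hFr0 : (1:ℝ)/2 < Fbar r0 := hball (by rw [Real.dist_eq]; rw [sub_zero]; rw [abs_of_pos hr0pos]; linarith)
  have hFr1 : (1:ℝ)/2 < Fbar r1 := hball (by rw [Real.dist_eq, sub_zero, abs_of_pos (by positivity)]; linarith)
  have hφr0 : 0 < φ r0 :=
    mul_pos hr0pos (H_pos μ Fbar hFbar hsecond hcdf_cont r0 r1 (by rw [hr0def, hr1def]; linarith)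
      (by linarith))
  -- tail bound
  obtain ⟨N, hN⟩ := ((tail_tendsto μ hsecond).eventually (eventually_lt_nhds hφr0)).exists
  set R : ℝ := max r0 (N:ℝ) with hRdef
  have hr0R : r0 ≤ R := le_max_left _ _
  have htail : ∀ r : ℝ, R ≤ r → φ r < φ r0 := by
    intro r hr
    have hrpos : 0 ≤ r := le_trans hr0pos.le (le_trans hr0R hr)
    have h1 : φ r ≤ ∫ a in Set.Ioi r, a ^ 2 ∂μ := by
      rw [← hgφ r hrpos, hg]
      exact g_le_tail μ hsecond r hrpos
    have h2 : ∫ a in Set.Ioi r, a ^ 2 ∂μ ≤ ∫ a in Set.Ioi (N:ℝ), a ^ 2 ∂μ := by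
      apply setIntegral_mono_set (hsecond.integrableOn)
        (Filter.Eventually.of_forall (fun x => sq_nonneg x))
        (HasSubset.Subset.eventuallyLE (Set.Ioi_subset_Ioi (le_trans (le_max_right _ _) hr)))
    linarith
  -- maximize on [0, R]
  obtain ⟨rs, hrsmem, hmax⟩ := isCompact_Icc.exists_isMaxOn
    (Set.nonempty_Icc.mpr (le_trans hr0pos.le hr0R)) φcont.continuousOn
  have hrs_ge : φ r0 ≤ φ rs := hmax ⟨hr0pos.le, hr0R⟩
  have hφrs_pos : 0 < φ rs := lt_of_lt_of_le hφr0 hrs_ge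
  have hrs0 : 0 < rs := by
    rcases lt_or_eq_of_le hrsmem.1 with h | h
    · exact h
    · exfalso
      have : φ rs = 0 := by rw [← h, hφdef]; simp
      linarith
  have hrsR : rs < R := by
    rcases lt_or_eq_of_le hrsmem.2 with h | h
    · exact h
    · exfalso
      have := htail R le_rfl
      rw [← h] at this
      linarith
  have hglob : ∀ r : ℝ, 0 ≤ r → φ r ≤ φ rs := by
    intro r hr
    rcases le_or_gt r R with h | h
    · exact hmax ⟨hr, h⟩
    · exact le_trans (htail r h.le).le hrs_ge
  -- first-order condition
  have hloc : IsLocalMax φ rs := hmax.isLocalMax (Icc_mem_nhds hrs0 hrsR)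
  have hfoc : H rs - rs * Fbar rs = 0 := hloc.hasDerivAt_eq_zero (hφderiv rs)
  have hHrs : H rs = rs * Fbar rs := by linarith
  have hFrs : 0 < Fbar rs := by
    rcases lt_or_eq_of_le (hnn rs) with h | h
    · exact h
    · exfalso
      have h0 : H rs = 0 := hH0 rs h.symm
      have : φ rs = 0 := by rw [hφdef]; simp only []; rw [h0, mul_zero]
      linarith
  have hfix : rs = m rs := by
    rw [hm, show (∫ u in Set.Ioi rs, Fbar u) = H rs from rfl, hHrs,
      mul_div_assoc, div_self (ne_of_gt hFrs), mul_one]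
  have hSrs : rs ∈ {r : ℝ | 0 < r ∧ 0 < Fbar r} := ⟨hrs0, hFrs⟩
  have he_rs : m rs / rs = 1 := by rw [← hfix]; exact div_self (ne_of_gt hrs0)
  -- sign of derivative
  have hsign_lt : ∀ x : ℝ, 0 < x → 0 < Fbar x → x < rs → x * Fbar x < H x := by
    intro x hx0 hxF hlt
    have h1 : m rs / rs < m x / x := hdgmrl ⟨hx0, hxF⟩ hSrs hlt
    rw [he_rs] at h1
    have h2 : x < m x := by
      rw [lt_div_iff₀ hx0] at h1
      linarith
    rw [hm, show (∫ u in Set.Ioi x, Fbar u) = H x from rfl] at h2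
    exact (lt_div_iff₀ hxF).mp h2
  have hsign_gt : ∀ x : ℝ, 0 < Fbar x → rs < x → H x < x * Fbar x := by
    intro x hxF hlt
    have hx0 : 0 < x := lt_trans hrs0 hlt
    have h1 : m x / x < m rs / rs := hdgmrl hSrs ⟨hx0, hxF⟩ hlt
    rw [he_rs] at h1
    have h2 : m x < x := by
      rw [div_lt_one hx0] at h1
      exact h1
    rw [hm, show (∫ u in Set.Ioi x, Fbar u) = H x from rfl] at h2
    exact (div_lt_iff₀ hxF).mp h2
  -- strict monotonicity on [0, rs]
  have hmono : StrictMonoOn φ (Set.Icc 0 rs) := by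
    apply strictMonoOn_of_deriv_pos (convex_Icc 0 rs) φcont.continuousOn
    intro x hx
    rw [interior_Icc] at hx
    rw [(hφderiv x).deriv]
    have hxF : 0 < Fbar x := lt_of_lt_of_le hFrs (hanti hx.2.le)
    exact sub_pos.mpr (hsign_lt x hx.1 hxF hx.2)
  have hstrict : ∀ r : ℝ, 0 ≤ r → r ≠ rs → φ r < φ rs := by
    intro r hr hne
    rcases lt_trichotomy r rs with h | h | h
    · exact hmono ⟨hr, h.le⟩ ⟨hrs0.le, le_rfl⟩ h
    · exact absurd h hne
    · rcases lt_or_eq_of_le (hnn r) with hF | hF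
      · have hanti2 : StrictAntiOn φ (Set.Icc rs r) := by
          apply strictAntiOn_of_deriv_neg (convex_Icc rs r) φcont.continuousOn
          intro x hx
          rw [interior_Icc] at hx
          rw [(hφderiv x).deriv]
          have hxF : 0 < Fbar x := lt_of_lt_of_le hF (hanti hx.2.le)
          exact sub_neg.mpr (hsign_gt x hxF hx.1)
        exact hanti2 ⟨le_rfl, h.le⟩ ⟨h.le, le_rfl⟩ h
      · have h0 : H r = 0 := hH0 r hF.symm
        have : φ r = 0 := by rw [hφdef]; simp only []; rw [h0, mul_zero]
        linarith
  refine ⟨rs, ⟨hrs0, hFrs, hfix⟩, ?_, ?_, ?_⟩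
  · rintro r ⟨hr0, hrF, hrfix⟩
    have h1 : m r / r = m rs / rs := by
      rw [← hrfix, ← hfix, div_self (ne_of_gt hr0), div_self (ne_of_gt hrs0)]
    exact hdgmrl.injOn ⟨hr0, hrF⟩ hSrs h1
  · intro r hr
    rw [hgφ r hr, hgφ rs hrs0.le]
    exact hglob r hr
  · intro r hr heq
    by_contra hne
    have := hstrict r hr hne
    rw [← hgφ r hr, ← hgφ rs hrs0.le] at this
    linarith [heq ▸ this]
end

section
/- Fix n ≥ 2 and r* > 0, and define R(α) = (4/((n+2)·α²))·(α − r*)⁺·(α + n·r*) for α > 0 (the ratio of aggregate realized market profits with and without demand uncertainty). Then sup_{α>0} R(α) = 1 + 1/(n² + 2n), and the supremum is attained exactly at α* = (2n/(n−1))·r*. In particular the realized Price of Uncertainty equals 1 + 1/(n² + 2n) independently of the underlying demand distribution, and it exceeds 1 for every n. -/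
/-- The realized Price of Uncertainty: for `n ≥ 2` retailers and supplier price
`r* > 0`, the ratio `R(α) = (4/((n+2)α²))·(α - r*)⁺·(α + n·r*)` of aggregate
realized market profits with and without demand uncertainty satisfies
`sup_{α > 0} R(α) = 1 + 1/(n² + 2n)`, attained exactly at `α* = (2n/(n-1))·r*`;
in particular the PoU is independent of the demand distribution and exceeds 1. -/
theorem price_of_uncertainty
    (n : ℕ) (hn : 2 ≤ n) (rstar : ℝ) (hr : 0 < rstar) :
    ∀ R : ℝ → ℝ,
      R = (fun α : ℝ =>
        (4 / (((n : ℝ) + 2) * α ^ 2)) * max (α - rstar) 0 * (α + (n : ℝ) * rstar)) →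
      ∀ αstar : ℝ, αstar = (2 * (n : ℝ) / ((n : ℝ) - 1)) * rstar →
        (∀ α : ℝ, 0 < α → R α ≤ 1 + 1 / ((n : ℝ) ^ 2 + 2 * (n : ℝ))) ∧
        R αstar = 1 + 1 / ((n : ℝ) ^ 2 + 2 * (n : ℝ)) ∧
        (∀ α : ℝ, 0 < α → R α = 1 + 1 / ((n : ℝ) ^ 2 + 2 * (n : ℝ)) → α = αstar) ∧
        1 < 1 + 1 / ((n : ℝ) ^ 2 + 2 * (n : ℝ)) := by
  intro R hR αstar hαs
  set N : ℝ := (n : ℝ) with hNdef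
  have hN : (2:ℝ) ≤ N := by rw [hNdef]; exact_mod_cast hn
  have hN1 : (0:ℝ) < N - 1 := by linarith
  have hN2 : (0:ℝ) < N + 2 := by linarith
  have hNN : (0:ℝ) < N ^ 2 + 2 * N := by nlinarith
  have hMpos : 1 < 1 + 1 / (N ^ 2 + 2 * N) := by
    have : 0 < 1 / (N ^ 2 + 2 * N) := by positivity
    linarith
  have key : ∀ α : ℝ, 0 < α → rstar < α →
      R α = (1 + 1 / (N ^ 2 + 2 * N))
        - ((N - 1) * α - 2 * N * rstar) ^ 2 / ((N ^ 2 + 2 * N) * α ^ 2) := by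
    intro α hα0 hrα
    have hmax : max (α - rstar) 0 = α - rstar := max_eq_left (by linarith)
    rw [hR]
    simp only [hmax]
    have hα0' : α ≠ 0 := ne_of_gt hα0
    have h2 : (N + 2) ≠ 0 := ne_of_gt hN2
    have h3 : (N ^ 2 + 2 * N) ≠ 0 := ne_of_gt hNN
    field_simp
    ring
  have hzero : ∀ α : ℝ, α ≤ rstar → R α = 0 := by
    intro α hle
    have hmax : max (α - rstar) 0 = 0 := max_eq_right (by linarith)
    rw [hR]
    simp only [hmax, mul_zero, zero_mul]
  have hαs_gt : rstar < αstar := by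
    rw [hαs]
    rw [div_mul_eq_mul_div, lt_div_iff₀ hN1]
    nlinarith
  have hαs_pos : 0 < αstar := lt_trans hr hαs_gt
  refine ⟨?_, ?_, ?_, hMpos⟩
  · intro α hα0
    rcases le_or_gt α rstar with h | h
    · rw [hzero α h]; linarith
    · rw [key α hα0 h]
      have : 0 ≤ ((N - 1) * α - 2 * N * rstar) ^ 2 / ((N ^ 2 + 2 * N) * α ^ 2) := by
        positivity
      linarith
  · rw [key αstar hαs_pos hαs_gt]
    have hsq : (N - 1) * αstar - 2 * N * rstar = 0 := by
      rw [hαs]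
      field_simp
      ring
    rw [hsq]
    norm_num
  · intro α hα0 heq
    have hgt : rstar < α := by
      by_contra h'
      push_neg at h'
      rw [hzero α h'] at heq
      linarith
    rw [key α hα0 hgt] at heq
    have hsq : ((N - 1) * α - 2 * N * rstar) ^ 2 / ((N ^ 2 + 2 * N) * α ^ 2) = 0 := by
      linarith
    have hden : (N ^ 2 + 2 * N) * α ^ 2 ≠ 0 := by positivity
    have hsq' : ((N - 1) * α - 2 * N * rstar) ^ 2 = 0 :=
      (div_eq_zero_iff.mp hsq).resolve_right hden
    have : (N - 1) * α = 2 * N * rstar := by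
      have := pow_eq_zero_iff (n := 2) (by norm_num) |>.mp hsq'
      linarith
    rw [hαs]
    field_simp
    linarith
end

section
/- Fix n ≥ 2 and r* > 0, and define R(α) = (4/((n+2)·α²))·(α − r*)·(α + n·r*) for α ≥ r*. Then R is strictly increasing on [r*, (2n/(n−1))·r*] and strictly decreasing on [(2n/(n−1))·r*, ∞). -/
/-- For `n ≥ 2` and `r* > 0`, the aggregate-profit ratio
`R(α) = (4/((n+2)α²))·(α - r*)·(α + n·r*)` is strictly increasing on
`[r*, (2n/(n-1))·r*]` and strictly decreasing on `[(2n/(n-1))·r*, ∞)`. -/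
theorem aggregate_ratio_unimodal
    (n : ℕ) (hn : 2 ≤ n) (rstar : ℝ) (hr : 0 < rstar) :
    ∀ R : ℝ → ℝ,
      R = (fun α : ℝ =>
        (4 / (((n : ℝ) + 2) * α ^ 2)) * (α - rstar) * (α + (n : ℝ) * rstar)) →
      StrictMonoOn R (Set.Icc rstar ((2 * (n : ℝ) / ((n : ℝ) - 1)) * rstar)) ∧
      StrictAntiOn R (Set.Ici ((2 * (n : ℝ) / ((n : ℝ) - 1)) * rstar)) := by
  intro R hR
  subst hR
  have hN : (2:ℝ) ≤ (n:ℝ) := by exact_mod_cast hn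
  have h1 : (0:ℝ) < (n:ℝ) - 1 := by linarith
  have hMform : (2 * (n : ℝ) / ((n : ℝ) - 1)) * rstar = 2 * (n:ℝ) * rstar / ((n:ℝ)-1) := by
    ring
  have hM : 0 < (2 * (n : ℝ) / ((n : ℝ) - 1)) * rstar := by
    rw [hMform]
    positivity
  constructor
  · intro x hx y hy hxy
    simp only [Set.mem_Icc] at hx hy
    have hx0 : 0 < x := lt_of_lt_of_le hr hx.1
    have hy0 : 0 < y := hx0.trans hxy
    have hyM : y * ((n:ℝ) - 1) ≤ 2 * (n:ℝ) * rstar := by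
      have := hy.2
      rw [hMform, le_div_iff₀ h1] at this
      linarith
    simp only []
    rw [div_mul_eq_mul_div, div_mul_eq_mul_div, div_mul_eq_mul_div, div_mul_eq_mul_div,
      div_lt_div_iff₀ (by positivity) (by positivity)]
    have key : ((n:ℝ)-1)*x*y < (n:ℝ)*rstar*(x+y) := by
      nlinarith [mul_le_mul_of_nonneg_left hyM hx0.le, mul_pos hx0 hr,
        mul_lt_mul_of_pos_left hxy (mul_pos (by linarith : (0:ℝ) < (n:ℝ)) hr)]
    nlinarith [mul_pos (mul_pos (mul_pos (show (0:ℝ) < (n:ℝ)+2 by linarith) hr)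
      (sub_pos.mpr hxy)) (sub_pos.mpr key)]
  · intro x hx y hy hxy
    simp only [Set.mem_Ici] at hx hy
    have hx0 : 0 < x := lt_of_lt_of_le hM hx
    have hy0 : 0 < y := hx0.trans hxy
    have hxM : 2 * (n:ℝ) * rstar ≤ x * ((n:ℝ) - 1) := by
      have := hx
      rw [hMform, div_le_iff₀ h1] at this
      linarith
    simp only []
    rw [div_mul_eq_mul_div, div_mul_eq_mul_div, div_mul_eq_mul_div, div_mul_eq_mul_div,
      div_lt_div_iff₀ (by positivity) (by positivity)]
    have key : (n:ℝ)*rstar*(x+y) < ((n:ℝ)-1)*x*y := by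
      nlinarith [mul_le_mul_of_nonneg_left hxM hy0.le, mul_pos hy0 hr,
        mul_lt_mul_of_pos_left hxy (mul_pos (by linarith : (0:ℝ) < (n:ℝ)) hr)]
    nlinarith [mul_pos (mul_pos (mul_pos (show (0:ℝ) < (n:ℝ)+2 by linarith) hr)
      (sub_pos.mpr hxy)) (sub_pos.mpr key)]
end

section
/- Fix r* > 0 and define R_n(α) = (4/((n+2)·α²))·(α − r*)·(α + n·r*) for α ≥ r*. For n ≥ 3, R_n(α) ≥ 1 if and only if α ∈ [2r*, (2n/(n−2))·r*]; for n = 2, R_2(α) ≥ 1 if and only if α ≥ 2r*. -/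
/-- Where the aggregate-profit ratio `R_n(α) = (4/((n+2)α²))·(α - r*)·(α + n·r*)`
(for `α ≥ r*`) is at least 1: for `n ≥ 3`, `R_n(α) ≥ 1` iff
`α ∈ [2r*, (2n/(n-2))·r*]`; for `n = 2`, `R_2(α) ≥ 1` iff `α ≥ 2r*`. -/
theorem ratio_exceeds_one_range
    (rstar : ℝ) (hr : 0 < rstar)
    (R : ℕ → ℝ → ℝ)
    (hR : ∀ (n : ℕ) (α : ℝ), R n α =
      (4 / (((n : ℝ) + 2) * α ^ 2)) * (α - rstar) * (α + (n : ℝ) * rstar)) :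
    (∀ n : ℕ, 3 ≤ n → ∀ α : ℝ, rstar ≤ α →
      (1 ≤ R n α ↔ 2 * rstar ≤ α ∧ α ≤ (2 * (n : ℝ) / ((n : ℝ) - 2)) * rstar)) ∧
    (∀ α : ℝ, rstar ≤ α → (1 ≤ R 2 α ↔ 2 * rstar ≤ α)) := by
  have key : ∀ (n : ℕ) (α : ℝ), rstar ≤ α →
      (1 ≤ R n α ↔ (α - 2 * rstar) * (((n : ℝ) - 2) * α - 2 * (n : ℝ) * rstar) ≤ 0) := by
    intro n α hα
    have hα0 : 0 < α := lt_of_lt_of_le hr hα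
    have hn0 : (0 : ℝ) ≤ (n : ℝ) := Nat.cast_nonneg n
    have hden : 0 < ((n : ℝ) + 2) * α ^ 2 := by positivity
    rw [hR]
    rw [show (4 / (((n : ℝ) + 2) * α ^ 2)) * (α - rstar) * (α + (n : ℝ) * rstar)
        = (4 * (α - rstar) * (α + (n : ℝ) * rstar)) / (((n : ℝ) + 2) * α ^ 2) by ring]
    rw [le_div_iff₀ hden]
    constructor
    · intro h; nlinarith
    · intro h; nlinarith
  constructor
  · intro n hn α hα
    have hn3 : (3 : ℝ) ≤ (n : ℝ) := by exact_mod_cast hn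
    have hn2 : (0 : ℝ) < (n : ℝ) - 2 := by linarith
    rw [key n α hα]
    constructor
    · intro h
      constructor
      · by_contra hc
        push_neg at hc
        have h2 : ((n : ℝ) - 2) * α - 2 * (n : ℝ) * rstar < 0 := by nlinarith
        nlinarith
      · by_contra hc
        push_neg at hc
        have h2 : 0 < ((n : ℝ) - 2) * α - 2 * (n : ℝ) * rstar := by
          have := (div_lt_iff₀ hn2).mp (by
            calc 2 * (n : ℝ) * rstar / ((n : ℝ) - 2)
                = (2 * (n : ℝ) / ((n : ℝ) - 2)) * rstar := by ring
              _ < α := hc)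
          linarith
        have h1 : 0 < α - 2 * rstar := by nlinarith
        nlinarith
    · rintro ⟨h1, h2⟩
      have h2' : ((n : ℝ) - 2) * α - 2 * (n : ℝ) * rstar ≤ 0 := by
        have : α * ((n : ℝ) - 2) ≤ 2 * (n : ℝ) * rstar := by
          have := (le_div_iff₀ hn2).mp (by
            calc α ≤ (2 * (n : ℝ) / ((n : ℝ) - 2)) * rstar := h2
              _ = 2 * (n : ℝ) * rstar / ((n : ℝ) - 2) := by ring)
          linarith
        linarith
      have h1' : 0 ≤ α - 2 * rstar := by linarith
      exact mul_nonpos_of_nonneg_of_nonpos h1' h2'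
  · intro α hα
    rw [key 2 α hα]
    push_cast
    constructor
    · intro h
      nlinarith
    · intro h
      nlinarith
end

section
/- Fix r* > 0 and α ≥ r*, and regard R_n(α) = (4/((n+2)·α²))·(α − r*)·(α + n·r*) as a function of the number of retailers n ≥ 2. If α ∈ [r*, 2r*] then R_n(α) is nondecreasing in n, and if α > 2r* then R_n(α) is strictly decreasing in n, in both cases independently of the underlying demand distribution. -/
/-- Monotonicity of the aggregate-profit ratio
`R_n(α) = (4/((n+2)α²))·(α - r*)·(α + n·r*)` in the number of retailers `n ≥ 2`:
if `α ∈ [r*, 2r*]` it is nondecreasing in `n`, and if `α > 2r*` it is strictly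
decreasing in `n`, independently of the underlying demand distribution. -/
theorem ratio_monotone_in_n
    (rstar α : ℝ) (hr : 0 < rstar) (hα : rstar ≤ α)
    (R : ℕ → ℝ)
    (hR : ∀ n : ℕ, R n =
      (4 / (((n : ℝ) + 2) * α ^ 2)) * (α - rstar) * (α + (n : ℝ) * rstar)) :
    (α ≤ 2 * rstar → ∀ m n : ℕ, 2 ≤ m → m ≤ n → R m ≤ R n) ∧
    (2 * rstar < α → ∀ m n : ℕ, 2 ≤ m → m < n → R n < R m) := by
  have hα0 : 0 < α := lt_of_lt_of_le hr hα
  constructor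
  · intro h2 m n hm hmn
    rw [hR m, hR n]
    have hm2 : (0:ℝ) < ((m:ℝ)+2)*α^2 := by positivity
    have hn2 : (0:ℝ) < ((n:ℝ)+2)*α^2 := by positivity
    have hmn' : (m:ℝ) ≤ n := by exact_mod_cast hmn
    rw [div_mul_eq_mul_div, div_mul_eq_mul_div, div_mul_eq_mul_div,
      div_mul_eq_mul_div, div_le_div_iff₀ hm2 hn2]
    nlinarith [mul_nonneg (mul_nonneg (mul_nonneg (sub_nonneg.2 hα) (sq_nonneg α))
      (sub_nonneg.2 hmn')) (sub_nonneg.2 h2)]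
  · intro h2 m n hm hmn
    rw [hR m, hR n]
    have hm2 : (0:ℝ) < ((m:ℝ)+2)*α^2 := by positivity
    have hn2 : (0:ℝ) < ((n:ℝ)+2)*α^2 := by positivity
    have hmn' : (m:ℝ) < n := by exact_mod_cast hmn
    have hαr : 0 < α - rstar := by linarith
    rw [div_mul_eq_mul_div, div_mul_eq_mul_div, div_mul_eq_mul_div,
      div_mul_eq_mul_div, div_lt_div_iff₀ hn2 hm2]
    nlinarith [mul_pos (mul_pos (mul_pos hαr (pow_pos hα0 2))
      (sub_pos.2 hmn')) (sub_pos.2 h2)]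
end

section
/- Fix n ≥ 1 and r* > 0, and define the ratio ρ(α) = ((n+1)²/n)·(n + α/r*)^{-1} for α > r* (the integrated firm's realized profit divided by the decentralized chain's aggregate realized profit). Then ρ(α) < 1 + 1/n for every α > r*, ρ is strictly decreasing on (r*, ∞), and ρ(α) → 1 + 1/n as α → r*⁺; hence the realized Price of Anarchy sup_{α > r*} ρ(α) equals 1 + 1/n independently of the underlying demand distribution. -/
/-- The realized Price of Anarchy: for `n ≥ 1` retailers and supplier price `r* > 0`,
the ratio `ρ(α) = ((n+1)²/n)·(n + α/r*)⁻¹` satisfies `ρ(α) < 1 + 1/n` for all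
`α > r*`, is strictly decreasing on `(r*, ∞)`, and tends to `1 + 1/n` as `α → r*⁺`;
hence `sup_{α > r*} ρ(α) = 1 + 1/n`, independently of the demand distribution. -/
theorem price_of_anarchy
    (n : ℕ) (hn : 1 ≤ n) (rstar : ℝ) (hr : 0 < rstar)
    (ρ : ℝ → ℝ)
    (hρ : ∀ α : ℝ, ρ α = (((n : ℝ) + 1) ^ 2 / (n : ℝ)) * ((n : ℝ) + α / rstar)⁻¹) :
    (∀ α : ℝ, rstar < α → ρ α < 1 + 1 / (n : ℝ)) ∧
    StrictAntiOn ρ (Set.Ioi rstar) ∧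
    Filter.Tendsto ρ (nhdsWithin rstar (Set.Ioi rstar)) (nhds (1 + 1 / (n : ℝ))) ∧
    IsLUB (ρ '' Set.Ioi rstar) (1 + 1 / (n : ℝ)) := by
  have hn' : (1 : ℝ) ≤ (n : ℝ) := by exact_mod_cast hn
  have hn0 : (0 : ℝ) < (n : ℝ) := lt_of_lt_of_le one_pos hn'
  have hc : (0 : ℝ) < ((n : ℝ) + 1) ^ 2 / (n : ℝ) := by positivity
  have hden : ∀ α : ℝ, rstar < α → (n : ℝ) + 1 < (n : ℝ) + α / rstar := by
    intro α hα
    have : (1 : ℝ) < α / rstar := (one_lt_div hr).2 hα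
    linarith
  have hval : ((n : ℝ) + 1) ^ 2 / (n : ℝ) * ((n : ℝ) + 1)⁻¹ = 1 + 1 / (n : ℝ) := by
    field_simp
  have hbound : ∀ α : ℝ, rstar < α → ρ α < 1 + 1 / (n : ℝ) := by
    intro α hα
    rw [hρ, ← hval]
    have h1 : (0 : ℝ) < (n : ℝ) + 1 := by linarith
    exact mul_lt_mul_of_pos_left (inv_strictAnti₀ h1 (hden α hα)) hc
  refine ⟨hbound, ?_, ?_, ?_⟩
  · intro a ha b hb hab
    rw [hρ, hρ]
    have hpa : (0 : ℝ) < (n : ℝ) + a / rstar := by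
      have := hden a ha; linarith
    have hlt : (n : ℝ) + a / rstar < (n : ℝ) + b / rstar := by
      have : a / rstar < b / rstar := by
        apply div_lt_div_of_pos_right hab hr
      linarith
    exact mul_lt_mul_of_pos_left (inv_strictAnti₀ hpa hlt) hc
  · have hcont : Filter.Tendsto ρ (nhds rstar) (nhds (1 + 1 / (n : ℝ))) := by
      have h1 : (n : ℝ) + rstar / rstar = (n : ℝ) + 1 := by
        rw [div_self hr.ne']
      have hne : (n : ℝ) + rstar / rstar ≠ 0 := by rw [h1]; linarith
      have : Filter.Tendsto (fun α => (((n : ℝ) + 1) ^ 2 / (n : ℝ)) * ((n : ℝ) + α / rstar)⁻¹)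
          (nhds rstar) (nhds ((((n : ℝ) + 1) ^ 2 / (n : ℝ)) * ((n : ℝ) + rstar / rstar)⁻¹)) := by
        apply Filter.Tendsto.const_mul
        exact Filter.Tendsto.inv₀
              ((tendsto_const_nhds.add ((continuous_id.div_const rstar).tendsto rstar))) hne
      rw [h1] at this
      rw [hval] at this
      convert this using 1
      funext α; exact hρ α
    exact hcont.mono_left nhdsWithin_le_nhds
  · constructor
    · rintro x ⟨α, hα, rfl⟩
      exact le_of_lt (hbound α hα)
    · intro b hb
      have hNB : (nhdsWithin rstar (Set.Ioi rstar)).NeBot := nhdsGT_neBot rstar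
      have hT : Filter.Tendsto ρ (nhdsWithin rstar (Set.Ioi rstar)) (nhds (1 + 1 / (n : ℝ))) := by
        have hcont : Filter.Tendsto ρ (nhds rstar) (nhds (1 + 1 / (n : ℝ))) := by
          have h1 : (n : ℝ) + rstar / rstar = (n : ℝ) + 1 := by
            rw [div_self hr.ne']
          have hne : (n : ℝ) + rstar / rstar ≠ 0 := by rw [h1]; linarith
          have : Filter.Tendsto (fun α => (((n : ℝ) + 1) ^ 2 / (n : ℝ)) * ((n : ℝ) + α / rstar)⁻¹)
              (nhds rstar) (nhds ((((n : ℝ) + 1) ^ 2 / (n : ℝ)) * ((n : ℝ) + rstar / rstar)⁻¹)) := by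
            apply Filter.Tendsto.const_mul
            exact Filter.Tendsto.inv₀
              ((tendsto_const_nhds.add ((continuous_id.div_const rstar).tendsto rstar))) hne
          rw [h1] at this
          rw [hval] at this
          convert this using 1
          funext α; exact hρ α
        exact hcont.mono_left nhdsWithin_le_nhds
      refine le_of_tendsto hT ?_
      filter_upwards [self_mem_nhdsWithin] with α hα
      exact hb ⟨α, hα, rfl⟩
end

section
/- Fix r* > 0 and α > r*, and regard ρ_n(α) = ((n+1)²/n)·(n + α/r*)^{-1} as a function of the number of retailers n ≥ 1 (treated as a real variable). If α < 2r*, then ρ_n(α) is strictly decreasing in n. If α > 2r*, then ρ_n(α) is strictly increasing in n for n > α/(α − 2r*) and strictly decreasing in n for n < α/(α − 2r*). -/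
private lemma key_lt (k : ℝ) (hk : 0 < k) {a b : ℝ} (ha : 0 < a) (hb : 0 < b)
    (hab : a < b) (h : a * b * (k - 2) < a + b + k) :
    (b + 1) ^ 2 / (b * (b + k)) < (a + 1) ^ 2 / (a * (a + k)) := by
  rw [div_lt_div_iff₀ (by positivity) (by positivity)]
  nlinarith [mul_pos (sub_pos.2 hab) (sub_pos.2 h)]

private lemma key_gt (k : ℝ) (hk : 0 < k) {a b : ℝ} (ha : 0 < a) (hb : 0 < b)
    (hab : a < b) (h : a + b + k < a * b * (k - 2)) :
    (a + 1) ^ 2 / (a * (a + k)) < (b + 1) ^ 2 / (b * (b + k)) := by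
  rw [div_lt_div_iff₀ (by positivity) (by positivity)]
  nlinarith [mul_pos (sub_pos.2 hab) (sub_pos.2 h)]

/-- Monotonicity of the Price-of-Anarchy ratio `ρ_n(α) = ((n+1)²/n)·(n + α/r*)⁻¹`
in the number of retailers `n ≥ 1` (treated as a real variable): if `α < 2r*`
it is strictly decreasing in `n`; if `α > 2r*` it is strictly increasing in `n`
for `n > α/(α - 2r*)` and strictly decreasing in `n` for `n < α/(α - 2r*)`. -/
theorem poa_ratio_monotone_in_n
    (rstar α : ℝ) (hr : 0 < rstar) (hα : rstar < α)
    (ρ : ℝ → ℝ)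
    (hρ : ∀ n : ℝ, ρ n = ((n + 1) ^ 2 / n) * (n + α / rstar)⁻¹) :
    (α < 2 * rstar → StrictAntiOn ρ (Set.Ici (1 : ℝ))) ∧
    (2 * rstar < α →
      StrictMonoOn ρ (Set.Ioi (α / (α - 2 * rstar))) ∧
      StrictAntiOn ρ (Set.Ico (1 : ℝ) (α / (α - 2 * rstar)))) := by
  set k : ℝ := α / rstar with hkdef
  have hk1 : 1 < k := (one_lt_div hr).2 hα
  have hk0 : 0 < k := by linarith
  have hρ' : ∀ n : ℝ, ρ n = (n + 1) ^ 2 / (n * (n + k)) := by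
    intro n; rw [hρ n, ← div_eq_mul_inv, div_div]
  constructor
  · intro hlt a ha b hb hab
    simp only [Set.mem_Ici] at ha hb
    have ha0 : (0:ℝ) < a := by linarith
    have hb0 : (0:ℝ) < b := by linarith
    have hk2 : k < 2 := by
      rw [hkdef, div_lt_iff₀ hr]; linarith
    rw [hρ' a, hρ' b]
    refine key_lt k hk0 ha0 hb0 hab ?_
    nlinarith [mul_pos (mul_pos ha0 hb0) (show (0:ℝ) < 2 - k by linarith)]
  · intro hgt
    have hk2 : 2 < k := by
      rw [hkdef, lt_div_iff₀ hr]; linarith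
    have hd : (0:ℝ) < α - 2 * rstar := by linarith
    have hα' : α = k * rstar := by rw [hkdef]; field_simp
    have heq : α / (α - 2 * rstar) = k / (k - 2) := by
      rw [show α - 2 * rstar = (k - 2) * rstar by rw [hα']; ring, hα',
        mul_div_mul_right _ _ hr.ne']
    have ht0 : 0 < k / (k - 2) := div_pos hk0 (by linarith)
    constructor
    · intro a ha b hb hab
      rw [heq] at ha hb
      simp only [Set.mem_Ioi] at ha hb
      have ha0 : (0:ℝ) < a := lt_trans ht0 ha
      have hb0 : (0:ℝ) < b := lt_trans ht0 hb
      have ha' : k < a * (k - 2) := by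
        rw [div_lt_iff₀ (by linarith)] at ha; linarith
      have hb' : k < b * (k - 2) := by
        rw [div_lt_iff₀ (by linarith)] at hb; linarith
      rw [hρ' a, hρ' b]
      refine key_gt k hk0 ha0 hb0 hab ?_
      nlinarith [mul_pos (sub_pos.2 ha') hb0]
    · intro a ha b hb hab
      rw [heq] at ha hb
      obtain ⟨ha1, ha2⟩ := ha
      obtain ⟨hb1, hb2⟩ := hb
      have ha0 : (0:ℝ) < a := by linarith
      have hb0 : (0:ℝ) < b := by linarith
      have hb' : b * (k - 2) < k := by
        rw [lt_div_iff₀ (by linarith)] at hb2; linarith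
      rw [hρ' a, hρ' b]
      refine key_lt k hk0 ha0 hb0 hab ?_
      nlinarith [mul_pos ha0 (sub_pos.2 hb')]
end

section
/- For any n ≥ 1 and any demand level α > 0, the ratio of the integrated firm's profit to the decentralized chain's aggregate profit in the deterministic market equals (α/2)² / [(n/(n+1))·(α/2)² + (n/(n+1)²)·(α/2)²] = 1 + 1/(n² + 2n); in particular it is constant in α, so the Price of Anarchy of the deterministic market equals 1 + 1/(n² + 2n), the same value as the realized Price of Uncertainty of the stochastic market. -/
/-- In the deterministic market, the ratio of the integrated firm's profit to the
decentralized chain's aggregate profit equals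
`(α/2)² / ((n/(n+1))·(α/2)² + n·(1/(n+1)²)·(α/2)²) = 1 + 1/(n² + 2n)` for every
demand level `α > 0`; in particular it is constant in `α`, so the Price of Anarchy
of the deterministic market equals `1 + 1/(n² + 2n)`, the same value as the
realized Price of Uncertainty of the stochastic market. -/
theorem deterministic_price_of_anarchy
    (n : ℕ) (hn : 1 ≤ n) :
    (∀ α : ℝ, 0 < α →
      (α / 2) ^ 2 /
        (((n : ℝ) / ((n : ℝ) + 1)) * (α / 2) ^ 2 +
          (n : ℝ) * ((1 / ((n : ℝ) + 1) ^ 2) * (α / 2) ^ 2)) =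
      1 + 1 / ((n : ℝ) ^ 2 + 2 * (n : ℝ))) ∧
    IsLUB ((fun α : ℝ =>
      (α / 2) ^ 2 /
        (((n : ℝ) / ((n : ℝ) + 1)) * (α / 2) ^ 2 +
          (n : ℝ) * ((1 / ((n : ℝ) + 1) ^ 2) * (α / 2) ^ 2))) '' Set.Ioi 0)
      (1 + 1 / ((n : ℝ) ^ 2 + 2 * (n : ℝ))) := by
  have hn1 : (1 : ℝ) ≤ (n : ℝ) := by exact_mod_cast hn
  have hnpos : (0 : ℝ) < (n : ℝ) := lt_of_lt_of_le one_pos hn1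
  have hn1pos : (0 : ℝ) < (n : ℝ) + 1 := by linarith
  have hdenom : (n : ℝ) ^ 2 + 2 * (n : ℝ) ≠ 0 := by nlinarith
  have key : ∀ α : ℝ, 0 < α →
      (α / 2) ^ 2 /
        (((n : ℝ) / ((n : ℝ) + 1)) * (α / 2) ^ 2 +
          (n : ℝ) * ((1 / ((n : ℝ) + 1) ^ 2) * (α / 2) ^ 2)) =
      1 + 1 / ((n : ℝ) ^ 2 + 2 * (n : ℝ)) := by
    intro α hα
    have hα2 : (α / 2) ^ 2 ≠ 0 := by positivity
    field_simp
    ring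
  refine ⟨key, ?_⟩
  have himg : (fun α : ℝ =>
      (α / 2) ^ 2 /
        (((n : ℝ) / ((n : ℝ) + 1)) * (α / 2) ^ 2 +
          (n : ℝ) * ((1 / ((n : ℝ) + 1) ^ 2) * (α / 2) ^ 2))) '' Set.Ioi 0 =
      {1 + 1 / ((n : ℝ) ^ 2 + 2 * (n : ℝ))} := by
    apply Set.eq_singleton_iff_nonempty_unique_mem.2
    constructor
    · exact ⟨_, ⟨1, Set.mem_Ioi.2 one_pos, key 1 one_pos⟩⟩
    · rintro x ⟨α, hα, rfl⟩
      exact key α hα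
  rw [himg]
  exact isLUB_singleton
end
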